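/- Let k ≥ 2 be an integer and let G be a path P_n with n ≥ 2 or a cycle C_n with n ≥ 3. Then γ_{t[1,k]}(G) = n/2 if n ≡ 0 (mod 4), γ_{t[1,k]}(G) = (n+1)/2 if n ≡ 1 (mod 4), γ_{t[1,k]}(G) = (n+2)/2 if n ≡ 2 (mod 4), and γ_{t[1,k]}(G) = (n+1)/2 if n ≡ 3 (mod 4). -/

import Mathlib

open SimpleGraph

/-- The lexicographic product of two simple graphs. -/
def SimpleGraph.lexProd {V W : Type*} (G : SimpleGraph V) (H : SimpleGraph W) :
    SimpleGraph (V × W) where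
  Adj p q := G.Adj p.1 q.1 ∨ (p.1 = q.1 ∧ H.Adj p.2 q.2)
  symm := by
    refine ⟨?_⟩
    rintro p q (h | ⟨e, h⟩)
    · exact Or.inl h.symm
    · exact Or.inr ⟨e.symm, h.symm⟩
  loopless := by
    refine ⟨?_⟩
    rintro p (h | ⟨_, h⟩)
    · exact G.loopless.irrefl _ h
    · exact H.loopless.irrefl _ h

/-- The `H`-layer of the product over a vertex `v` of `G`: all pairs with first
coordinate `v`. -/
def layer {V W : Type*} (v : V) : Set (V × W) := {p | p.1 = v}

/-- `S` is a `[1,k]`-set of `G`: every vertex outside `S` has at least `1` and at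
most `k` neighbors in `S`. -/
def IsOneK {V : Type*} (G : SimpleGraph V) (k : ℕ) (S : Set V) : Prop :=
  ∀ v ∉ S, 1 ≤ (G.neighborSet v ∩ S).ncard ∧ (G.neighborSet v ∩ S).ncard ≤ k

/-- `S` is a total `[1,k]`-set of `G`: every vertex has at least `1` and at most `k`
neighbors in `S`. -/
def IsTotalOneK {V : Type*} (G : SimpleGraph V) (k : ℕ) (S : Set V) : Prop :=
  ∀ v, 1 ≤ (G.neighborSet v ∩ S).ncard ∧ (G.neighborSet v ∩ S).ncard ≤ k

/-- `S` is an independent `[1,k]`-set of `G`. -/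
def IsIndepOneK {V : Type*} (G : SimpleGraph V) (k : ℕ) (S : Set V) : Prop :=
  IsOneK G k S ∧ ∀ v ∈ S, ∀ w ∈ S, ¬ G.Adj v w

/-- `S` is `j`-dependent: every vertex of `S` has at most `j` neighbors in `S`. -/
def IsJDep {V : Type*} (G : SimpleGraph V) (j : ℕ) (S : Set V) : Prop :=
  ∀ v ∈ S, (G.neighborSet v ∩ S).ncard ≤ j

/-- `S` is an efficient dominating set of `G`. -/
def IsEffDom {V : Type*} (G : SimpleGraph V) (S : Set V) : Prop :=
  (∀ v ∉ S, (G.neighborSet v ∩ S).ncard = 1) ∧ ∀ v ∈ S, (G.neighborSet v ∩ S).ncard = 0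

/-- Membership in `SD^j_{[1,k]}(G)`: a `j`-dependent `[1,k]`-set such that every
vertex of `S` with no neighbor in `S` is at distance at least `3` from every other
vertex of `S`. -/
def InSD {V : Type*} (G : SimpleGraph V) (k j : ℕ) (S : Set V) : Prop :=
  IsOneK G k S ∧ IsJDep G j S ∧
    ∀ v ∈ S, (G.neighborSet v ∩ S).ncard = 0 → ∀ v' ∈ S, v' ≠ v → 3 ≤ G.dist v v'

/-- The `[1,k]`-domination number `γ_{[1,k]}`. -/
noncomputable def gammaOneK {V : Type*} (G : SimpleGraph V) (k : ℕ) : ℕ :=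
  sInf {n | ∃ S : Set V, IsOneK G k S ∧ S.ncard = n}

/-- The total `[1,k]`-domination number `γ_{t[1,k]}`. -/
noncomputable def gammaTotalOneK {V : Type*} (G : SimpleGraph V) (k : ℕ) : ℕ :=
  sInf {n | ∃ S : Set V, IsTotalOneK G k S ∧ S.ncard = n}

/-- The `[1,k]`-independence number `γ_{i[1,k]}`. -/
noncomputable def gammaIndepOneK {V : Type*} (G : SimpleGraph V) (k : ℕ) : ℕ :=
  sInf {n | ∃ S : Set V, IsIndepOneK G k S ∧ S.ncard = n}

/-- `D` is a dominating set of `G`. -/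
def IsDomSet {V : Type*} (G : SimpleGraph V) (D : Set V) : Prop :=
  ∀ v ∉ D, ∃ u ∈ D, G.Adj v u

/-- `D` is a total dominating set of `G`. -/
def IsTotalDomSet {V : Type*} (G : SimpleGraph V) (D : Set V) : Prop :=
  ∀ v, ∃ u ∈ D, G.Adj v u

/-- The domination number `γ`. -/
noncomputable def gammaDom {V : Type*} (G : SimpleGraph V) : ℕ :=
  sInf {n | ∃ D : Set V, IsDomSet G D ∧ D.ncard = n}

/-- The total domination number `γ_t`. -/
noncomputable def gammaTotalDom {V : Type*} (G : SimpleGraph V) : ℕ :=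
  sInf {n | ∃ D : Set V, IsTotalDomSet G D ∧ D.ncard = n}

set_option linter.unusedSectionVars false
set_option maxHeartbeats 1000000
open Finset
open scoped Classical

def pred4 (n m : ℕ) : Prop := m % 4 = 1 ∨ m % 4 = 2 ∨ ((n % 4 = 1 ∨ n % 4 = 2) ∧ m + 2 = n)

instance (n m : ℕ) : Decidable (pred4 n m) := by unfold pred4; infer_instance

lemma count_q : ∀ n : ℕ, ((Finset.range n).filter (fun m => m % 4 = 1 ∨ m % 4 = 2)).card
    = n / 2 + (if n % 4 = 3 then 1 else 0) := by
  intro n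
  induction n with
  | zero => simp
  | succ n ih =>
    rw [Finset.range_add_one, Finset.filter_insert]
    by_cases h : n % 4 = 1 ∨ n % 4 = 2
    · rw [if_pos h, Finset.card_insert_of_notMem (by simp)]
      rw [ih]; split_ifs <;> omega
    · rw [if_neg h, ih]; split_ifs <;> omega

lemma count_pred4 (n : ℕ) (hn : 2 ≤ n) :
    ((Finset.range n).filter (pred4 n)).card = n / 2 + (if n % 4 = 0 then 0 else 1) := by
  by_cases h : n % 4 = 1 ∨ n % 4 = 2
  · have he : (Finset.range n).filter (pred4 n)
        = insert (n - 2) ((Finset.range n).filter (fun m => m % 4 = 1 ∨ m % 4 = 2)) := by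
      ext m
      simp only [Finset.mem_filter, Finset.mem_range, Finset.mem_insert]
      unfold pred4
      omega
    rw [he, Finset.card_insert_of_notMem (by simp; omega), count_q]
    split_ifs <;> omega
  · have he : (Finset.range n).filter (pred4 n)
        = (Finset.range n).filter (fun m => m % 4 = 1 ∨ m % 4 = 2) := by
      apply Finset.filter_congr
      intro m hm
      unfold pred4
      simp only [Finset.mem_range] at hm
      constructor
      · intro hh; omega
      · intro hh; omega
    rw [he, count_q]; split_ifs <;> omega

lemma card_filter_val {n : ℕ} (p : ℕ → Prop) [DecidablePred p] :
    (Finset.univ.filter (fun i : Fin n => p i.val)).card = ((Finset.range n).filter p).card := by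
  apply Finset.card_bij (fun a _ => a.val)
  · intro a ha; simp only [Finset.mem_filter, Finset.mem_range] at *; exact ⟨a.isLt, ha.2⟩
  · intro a _ b _ h; exact Fin.ext h
  · intro b hb; simp only [Finset.mem_filter, Finset.mem_range] at hb
    exact ⟨⟨b, hb.1⟩, by simp [hb.2], rfl⟩

section Generic
variable {V : Type*} [Fintype V] [DecidableEq V]

lemma ncard_inter_eq (G : SimpleGraph V) [DecidableRel G.Adj] (v : V) (S : Finset V) :
    (G.neighborSet v ∩ ↑S).ncard = (S.filter (G.Adj v)).card := by
  rw [← Set.ncard_coe_finset]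
  congr 1
  ext s
  simp [and_comm, SimpleGraph.neighborSet]

lemma card_filter_pair {p : V → Prop} [DecidablePred p] {a b : V} (hab : a ≠ b)
    (hp : ∀ s, p s ↔ s = a ∨ s = b) (S : Finset V) :
    (S.filter p).card = (if a ∈ S then 1 else 0) + (if b ∈ S then 1 else 0) := by
  have : S.filter p = S.filter (· = a) ∪ S.filter (· = b) := by
    rw [← Finset.filter_or]; exact Finset.filter_congr (fun s _ => by simp [hp s])
  rw [this, Finset.card_union_of_disjoint, Finset.filter_eq', Finset.filter_eq']
  · split_ifs <;> simp
  · simp only [Finset.disjoint_left, Finset.mem_filter]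
    rintro x ⟨-, rfl⟩ ⟨-, h⟩; exact hab h

lemma card_filter_single {p : V → Prop} [DecidablePred p] {a : V}
    (hp : ∀ s, p s ↔ s = a) (S : Finset V) :
    (S.filter p).card = (if a ∈ S then 1 else 0) := by
  have : S.filter p = S.filter (· = a) := Finset.filter_congr (fun s _ => by simp [hp s])
  rw [this, Finset.filter_eq']
  split_ifs <;> simp

lemma sum_d (G : SimpleGraph V) [DecidableRel G.Adj] (S : Finset V) :
    ∑ v : V, (S.filter (G.Adj v)).card = ∑ s ∈ S, (Finset.univ.filter (G.Adj s)).card := by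
  simp only [Finset.card_filter]
  rw [Finset.sum_comm]
  congr 1
  ext s
  congr 1
  ext v
  simp [SimpleGraph.adj_comm]

lemma lb_generic (G : SimpleGraph V) [DecidableRel G.Adj] (S : Finset V)
    (hdom : ∀ v, 1 ≤ (S.filter (G.Adj v)).card)
    (hdeg : ∀ s, (Finset.univ.filter (G.Adj s)).card ≤ 2) :
    Fintype.card V ≤ 2 * S.card := by
  have h1 : Fintype.card V ≤ ∑ v : V, (S.filter (G.Adj v)).card := by
    rw [← Finset.card_univ, Finset.card_eq_sum_ones]
    exact Finset.sum_le_sum (fun v _ => hdom v)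
  have h2 : ∑ s ∈ S, (Finset.univ.filter (G.Adj s)).card ≤ 2 * S.card := by
    calc _ ≤ ∑ _s ∈ S, 2 := Finset.sum_le_sum (fun s _ => hdeg s)
    _ = 2 * S.card := by rw [Finset.sum_const]; ring
  have h3 := sum_d G S
  omega

lemma all_eq_one (t : Finset V) (f : V → ℕ) (hle : ∑ v ∈ t, f v ≤ t.card)
    (hge : ∀ v ∈ t, 1 ≤ f v) : ∀ v ∈ t, f v = 1 := by
  by_contra h
  push_neg at h
  obtain ⟨v, hv, hne⟩ := h
  have : ∑ v ∈ t, (fun _ => 1) v < ∑ v ∈ t, f v :=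
    Finset.sum_lt_sum hge ⟨v, hv, by have := hge v hv; omega⟩
  simp only [Finset.sum_const, smul_eq_mul, mul_one] at this
  omega

lemma all_eq_two (t : Finset V) (f : V → ℕ) (hge : 2 * t.card ≤ ∑ v ∈ t, f v)
    (hle : ∀ v ∈ t, f v ≤ 2) : ∀ v ∈ t, f v = 2 := by
  by_contra h
  push_neg at h
  obtain ⟨v, hv, hne⟩ := h
  have : ∑ v ∈ t, f v < ∑ v ∈ t, (fun _ => 2) v :=
    Finset.sum_lt_sum hle ⟨v, hv, by have := hle v hv; omega⟩
  simp only [Finset.sum_const, smul_eq_mul] at this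
  omega

lemma mod_cases_lt (n a : ℕ) (h : a < 2 * n) : a % n = if a < n then a else a - n := by
  split_ifs with hh
  · exact Nat.mod_eq_of_lt hh
  · rw [Nat.mod_eq_sub_mod (by omega), Nat.mod_eq_of_lt (by omega)]

end Generic

section Path
variable {n : ℕ}

lemma path_adj_zero (hn : 2 ≤ n) (v : Fin n) (hv : v.val = 0) (s : Fin n) :
    (pathGraph n).Adj v s ↔ s = ⟨1, by omega⟩ := by
  rw [pathGraph_adj, Fin.ext_iff]
  simp only [Fin.val_mk]
  have := s.isLt
  omega

lemma path_adj_last (hn : 2 ≤ n) (v : Fin n) (hv : v.val = n - 1) (hv0 : 0 < v.val) (s : Fin n) :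
    (pathGraph n).Adj v s ↔ s = ⟨n - 2, by omega⟩ := by
  rw [pathGraph_adj, Fin.ext_iff]
  simp only [Fin.val_mk]
  have := s.isLt
  omega

lemma path_adj_mid (v : Fin n) (hv0 : 0 < v.val) (hv1 : v.val < n - 1) (s : Fin n) :
    (pathGraph n).Adj v s ↔ s = ⟨v.val - 1, by omega⟩ ∨ s = ⟨v.val + 1, by omega⟩ := by
  rw [pathGraph_adj, Fin.ext_iff, Fin.ext_iff]
  simp only [Fin.val_mk]
  have := s.isLt
  omega

lemma path_deg_le (hn : 2 ≤ n) (s : Fin n) :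
    (Finset.univ.filter ((pathGraph n).Adj s)).card ≤ 2 := by
  by_cases h0 : s.val = 0
  · rw [card_filter_single (path_adj_zero hn s h0)]; split_ifs <;> omega
  · by_cases h1 : s.val = n - 1
    · rw [card_filter_single (path_adj_last hn s h1 (by omega))]; split_ifs <;> omega
    · have := s.isLt
      rw [card_filter_pair (a := ⟨s.val - 1, by omega⟩) (b := ⟨s.val + 1, by omega⟩)
        (by simp only [ne_eq, Fin.ext_iff, Fin.val_mk]; omega)
        (path_adj_mid s (by omega) (by omega))]
      split_ifs <;> omega

lemma path_upper (hn : 2 ≤ n) {k : ℕ} (hk : 2 ≤ k) :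
    IsTotalOneK (pathGraph n) k
      (↑(Finset.univ.filter (fun i : Fin n => pred4 n i.val)) : Set (Fin n)) := by
  set S := Finset.univ.filter (fun i : Fin n => pred4 n i.val) with hS
  have hmem : ∀ (m : ℕ) (h : m < n), ((⟨m, h⟩ : Fin n) ∈ S) ↔ pred4 n m := by
    intro m h; simp [hS]
  intro v
  rw [ncard_inter_eq]
  have hvlt := v.isLt
  by_cases h0 : v.val = 0
  · rw [card_filter_single (path_adj_zero hn v h0)]
    have h1 : ((⟨1, by omega⟩ : Fin n) ∈ S) := by rw [hmem]; unfold pred4; omega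
    rw [if_pos h1]
    omega
  · by_cases h1 : v.val = n - 1
    · rw [card_filter_single (path_adj_last hn v h1 (by omega))]
      have h2 : ((⟨n - 2, by omega⟩ : Fin n) ∈ S) := by rw [hmem]; unfold pred4; omega
      rw [if_pos h2]
      omega
    · rw [card_filter_pair (a := ⟨v.val - 1, by omega⟩) (b := ⟨v.val + 1, by omega⟩)
        (by simp only [ne_eq, Fin.ext_iff, Fin.val_mk]; omega)
        (path_adj_mid v (by omega) (by omega))]
      have hor : ((⟨v.val - 1, by omega⟩ : Fin n) ∈ S) ∨ ((⟨v.val + 1, by omega⟩ : Fin n) ∈ S) := by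
        rw [hmem, hmem]; unfold pred4; omega
      constructor
      · rcases hor with h | h
        · rw [if_pos h]; omega
        · rw [if_pos h]; split_ifs <;> omega
      · split_ifs <;> omega

lemma path_lower (hn : 2 ≤ n) {k : ℕ} (S' : Set (Fin n)) (hS' : IsTotalOneK (pathGraph n) k S') :
    n / 2 + (if n % 4 = 0 then 0 else 1) ≤ S'.ncard := by
  classical
  have hfin : S'.Finite := Set.toFinite _
  set T := hfin.toFinset with hT
  have hcoe : (↑T : Set (Fin n)) = S' := hfin.coe_toFinset
  have hncard : S'.ncard = T.card := by rw [← hcoe, Set.ncard_coe_finset]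
  have hd : ∀ v : Fin n, 1 ≤ (T.filter ((pathGraph n).Adj v)).card ∧
      (T.filter ((pathGraph n).Adj v)).card ≤ k := by
    intro v
    have := hS' v
    rw [← hcoe, ncard_inter_eq] at this
    exact this
  have hdom : ∀ v : Fin n, 1 ≤ (T.filter ((pathGraph n).Adj v)).card := fun v => (hd v).1
  have hlb : n ≤ 2 * T.card := by
    have := lb_generic (pathGraph n) T hdom (path_deg_le hn)
    simpa using this
  rw [hncard]
  by_cases hmod : n % 4 = 2
  swap
  · split_ifs <;> omega
  -- n ≡ 2 (mod 4): rule out T.card = n / 2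
  rw [if_neg (by omega)]
  by_contra hlt
  push_neg at hlt
  have hcard : T.card = n / 2 := by omega
  have h2card : 2 * T.card = n := by omega
  -- all d v = 1
  have hsum_le : ∑ v : Fin n, (T.filter ((pathGraph n).Adj v)).card ≤ (Finset.univ : Finset (Fin n)).card := by
    rw [sum_d]
    calc ∑ s ∈ T, (Finset.univ.filter ((pathGraph n).Adj s)).card
        ≤ ∑ _s ∈ T, 2 := Finset.sum_le_sum (fun s _ => path_deg_le hn s)
      _ = 2 * T.card := by rw [Finset.sum_const]; ring
      _ = (Finset.univ : Finset (Fin n)).card := by simp [h2card]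
  have hall1 : ∀ v : Fin n, (T.filter ((pathGraph n).Adj v)).card = 1 := by
    intro v
    exact all_eq_one Finset.univ _ hsum_le (fun v _ => hdom v) v (Finset.mem_univ v)
  -- all degrees of vertices in T are 2
  have hsum_ge : 2 * T.card ≤ ∑ s ∈ T, (Finset.univ.filter ((pathGraph n).Adj s)).card := by
    rw [← sum_d, h2card]
    calc (n : ℕ) = (Finset.univ : Finset (Fin n)).card := by simp
      _ = ∑ _v : Fin n, 1 := by simp
      _ ≤ _ := Finset.sum_le_sum (fun v _ => hdom v)
  have hall2 : ∀ s ∈ T, (Finset.univ.filter ((pathGraph n).Adj s)).card = 2 :=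
    all_eq_two T _ hsum_ge (fun s _ => path_deg_le hn s)
  -- vertex 0 is not in T
  have h0T : (⟨0, by omega⟩ : Fin n) ∉ T := by
    intro hmem
    have := hall2 _ hmem
    rw [card_filter_single (path_adj_zero hn _ rfl)] at this
    split_ifs at this <;> omega
  -- indicator
  set x : ℕ → ℕ := fun m => if h : m < n then (if (⟨m, h⟩ : Fin n) ∈ T then 1 else 0) else 0
    with hx
  have hx0 : x 0 = 0 := by
    rw [hx]
    simp only [dif_pos (show 0 < n by omega)]
    rw [if_neg h0T]
  have hrec : ∀ m : ℕ, 0 < m → m < n - 1 → x (m - 1) + x (m + 1) = 1 := by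
    intro m hm0 hm1
    have h1 := hall1 ⟨m, by omega⟩
    rw [card_filter_pair (a := ⟨m - 1, by omega⟩) (b := ⟨m + 1, by omega⟩)
      (by simp only [ne_eq, Fin.ext_iff, Fin.val_mk]; omega)
      (path_adj_mid ⟨m, by omega⟩ (by simpa) (by simpa))] at h1
    rw [hx]
    simp only [dif_pos (show m - 1 < n by omega), dif_pos (show m + 1 < n by omega)]
    convert h1 using 3
  have hchain : ∀ t : ℕ, 2 * t ≤ n - 2 → x (2 * t) = t % 2 := by
    intro t
    induction t with
    | zero => intro _; simpa using hx0
    | succ t ih =>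
      intro ht
      have hr := hrec (2 * t + 1) (by omega) (by omega)
      have ihh := ih (by omega)
      have : (2 * t + 1) - 1 = 2 * t := by omega
      rw [this] at hr
      have : (2 * t + 1) + 1 = 2 * (t + 1) := by omega
      rw [this] at hr
      omega
  have hlast : x (n - 2) = 1 := by
    have h1 := hall1 ⟨n - 1, by omega⟩
    rw [card_filter_single (path_adj_last hn ⟨n - 1, by omega⟩ rfl (by simp; omega))] at h1
    rw [hx]
    simp only [dif_pos (show n - 2 < n by omega)]
    convert h1 using 2
  have hfin2 : x (n - 2) = ((n - 2) / 2) % 2 := by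
    have := hchain ((n - 2) / 2) (by omega)
    rwa [show 2 * ((n - 2) / 2) = n - 2 by omega] at this
  omega

end Path

section Cyc
variable {m : ℕ}

lemma cyc_adj (v s : Fin (m + 2)) :
    (cycleGraph (m + 2)).Adj v s ↔ s = v - 1 ∨ s = v + 1 := by
  rw [← SimpleGraph.mem_neighborFinset, cycleGraph_neighborFinset]
  simp

lemma cyc_val_add (v : Fin (m + 2)) : (v + 1).val = (v.val + 1) % (m + 2) := by
  rw [Fin.add_def, Fin.val_one]

lemma cyc_val_sub (v : Fin (m + 2)) : (v - 1).val = (v.val + (m + 1)) % (m + 2) := by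
  rw [Fin.sub_def]
  simp only [Fin.val_one]
  congr 1
  omega

lemma cyc_ne (hm : 1 ≤ m) (v : Fin (m + 2)) : v - 1 ≠ v + 1 := by
  intro h
  have h2 := cyc_val_sub v
  rw [h, cyc_val_add v] at h2
  have hv := v.isLt
  rw [mod_cases_lt (m + 2) (v.val + 1) (by omega),
    mod_cases_lt (m + 2) (v.val + (m + 1)) (by omega)] at h2
  split_ifs at h2 <;> omega

lemma cyc_deg (hm : 1 ≤ m) (s : Fin (m + 2)) :
    (Finset.univ.filter ((cycleGraph (m + 2)).Adj s)).card = 2 := by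
  rw [card_filter_pair (cyc_ne hm s) (cyc_adj s)]
  simp

lemma cyc_upper (hm : 1 ≤ m) {k : ℕ} (hk : 2 ≤ k) :
    IsTotalOneK (cycleGraph (m + 2)) k
      (↑(Finset.univ.filter (fun i : Fin (m + 2) => pred4 (m + 2) i.val)) : Set (Fin (m + 2))) := by
  set S := Finset.univ.filter (fun i : Fin (m + 2) => pred4 (m + 2) i.val) with hS
  intro v
  rw [ncard_inter_eq, card_filter_pair (cyc_ne hm v) (cyc_adj v)]
  have hvlt := v.isLt
  have ha := cyc_val_sub v
  have hb := cyc_val_add v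
  rw [mod_cases_lt (m + 2) (v.val + (m + 1)) (by omega)] at ha
  rw [mod_cases_lt (m + 2) (v.val + 1) (by omega)] at hb
  have hor : (v - 1) ∈ S ∨ (v + 1) ∈ S := by
    simp only [hS, Finset.mem_filter, Finset.mem_univ, true_and]
    unfold pred4
    split_ifs at ha hb <;> omega
  constructor
  · rcases hor with h | h
    · rw [if_pos h]; omega
    · rw [if_pos h]; split_ifs <;> omega
  · split_ifs <;> omega

open Fin.NatCast Fin.CommRing in
lemma cyc_lower (hm : 1 ≤ m) {k : ℕ} (S' : Set (Fin (m + 2)))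
    (hS' : IsTotalOneK (cycleGraph (m + 2)) k S') :
    (m + 2) / 2 + (if (m + 2) % 4 = 0 then 0 else 1) ≤ S'.ncard := by
  classical
  have hfin : S'.Finite := Set.toFinite _
  set T := hfin.toFinset with hT
  have hcoe : (↑T : Set (Fin (m + 2))) = S' := hfin.coe_toFinset
  have hncard : S'.ncard = T.card := by rw [← hcoe, Set.ncard_coe_finset]
  have hd : ∀ v : Fin (m + 2), 1 ≤ (T.filter ((cycleGraph (m + 2)).Adj v)).card ∧
      (T.filter ((cycleGraph (m + 2)).Adj v)).card ≤ k := by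
    intro v
    have := hS' v
    rw [← hcoe, ncard_inter_eq] at this
    exact this
  have hdom : ∀ v : Fin (m + 2), 1 ≤ (T.filter ((cycleGraph (m + 2)).Adj v)).card :=
    fun v => (hd v).1
  have hlb : m + 2 ≤ 2 * T.card := by
    have := lb_generic (cycleGraph (m + 2)) T hdom (fun s => le_of_eq (cyc_deg hm s))
    simpa using this
  rw [hncard]
  by_cases hmod : (m + 2) % 4 = 2
  swap
  · split_ifs <;> omega
  rw [if_neg (by omega)]
  by_contra hlt
  push_neg at hlt
  have h2card : 2 * T.card = m + 2 := by omega
  have hsum_le : ∑ v : Fin (m + 2), (T.filter ((cycleGraph (m + 2)).Adj v)).card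
      ≤ (Finset.univ : Finset (Fin (m + 2))).card := by
    rw [sum_d]
    calc ∑ s ∈ T, (Finset.univ.filter ((cycleGraph (m + 2)).Adj s)).card
        = ∑ _s ∈ T, 2 := Finset.sum_congr rfl (fun s _ => cyc_deg hm s)
      _ = 2 * T.card := by rw [Finset.sum_const]; ring
      _ ≤ (Finset.univ : Finset (Fin (m + 2))).card := by simp; omega
  have hall1 : ∀ v : Fin (m + 2), (T.filter ((cycleGraph (m + 2)).Adj v)).card = 1 := by
    intro v
    exact all_eq_one Finset.univ _ hsum_le (fun v _ => hdom v) v (Finset.mem_univ v)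
  set x : ℕ → ℕ := fun j => if ((j : Fin (m + 2)) ∈ T) then 1 else 0 with hx
  have hx1 : ∀ j, x j ≤ 1 := by intro j; simp only [hx]; split_ifs <;> omega
  have hrec : ∀ j : ℕ, x j + x (j + 2) = 1 := by
    intro j
    have h1 := hall1 ((j : Fin (m + 2)) + 1)
    rw [card_filter_pair (cyc_ne hm _) (cyc_adj _)] at h1
    have e1 : (j : Fin (m + 2)) + 1 - 1 = (j : Fin (m + 2)) := by ring
    have e2 : (j : Fin (m + 2)) + 1 + 1 = ((j + 2 : ℕ) : Fin (m + 2)) := by push_cast; ring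
    rw [e1, e2] at h1
    exact h1
  have hper : x (0 + (m + 2)) = x 0 := by
    have e : ((0 + (m + 2) : ℕ) : Fin (m + 2)) = ((0 : ℕ) : Fin (m + 2)) := by
      apply Fin.ext
      rw [Fin.val_natCast, Fin.val_natCast]
      simp
    simp only [hx, e]
  have hchain : ∀ t : ℕ, x (2 * t) = if t % 2 = 0 then x 0 else 1 - x 0 := by
    intro t
    induction t with
    | zero => simp
    | succ t ih =>
      have hr := hrec (2 * t)
      rw [show 2 * t + 2 = 2 * (t + 1) by omega] at hr
      have h0 := hx1 0
      have h1 := hx1 (2 * t)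
      split_ifs at ih ⊢ <;> omega
  have hfin2 := hchain ((m + 2) / 2)
  rw [show 2 * ((m + 2) / 2) = 0 + (m + 2) by omega, hper] at hfin2
  have h0 := hx1 0
  split_ifs at hfin2 <;> omega

end Cyc

/-- For `k ≥ 2`, the total `[1,k]`-domination number of the path `P_n`
(`n ≥ 2`) and of the cycle `C_n` (`n ≥ 3`) is `n/2`, `(n+1)/2`, `(n+2)/2`, `(n+1)/2`
according as `n ≡ 0, 1, 2, 3 (mod 4)`. -/
theorem stmt3 (k : ℕ) (hk : 2 ≤ k) :
    (∀ n : ℕ, 2 ≤ n →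
      gammaTotalOneK (SimpleGraph.pathGraph n) k =
        (if n % 4 = 0 then n / 2 else if n % 4 = 2 then (n + 2) / 2 else (n + 1) / 2)) ∧
    (∀ n : ℕ, 3 ≤ n →
      gammaTotalOneK (SimpleGraph.cycleGraph n) k =
        (if n % 4 = 0 then n / 2 else if n % 4 = 2 then (n + 2) / 2 else (n + 1) / 2)) := by
  constructor
  · intro n hn
    have hmem : (n / 2 + (if n % 4 = 0 then 0 else 1)) ∈
        {r | ∃ S : Set (Fin n), IsTotalOneK (SimpleGraph.pathGraph n) k S ∧ S.ncard = r} := by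
      refine ⟨_, path_upper hn hk, ?_⟩
      rw [Set.ncard_coe_finset, card_filter_val, count_pred4 n hn]
    have h1 : gammaTotalOneK (SimpleGraph.pathGraph n) k
        = n / 2 + (if n % 4 = 0 then 0 else 1) := by
      unfold gammaTotalOneK
      refine le_antisymm (Nat.sInf_le hmem) (le_csInf ⟨_, hmem⟩ ?_)
      rintro r ⟨S, hS, rfl⟩
      exact path_lower hn S hS
    rw [h1]
    split_ifs <;> omega
  · intro n hn
    obtain ⟨m, rfl⟩ : ∃ m, n = m + 2 := ⟨n - 2, by omega⟩
    have hm : 1 ≤ m := by omega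
    have hn2 : 2 ≤ m + 2 := by omega
    have hmem : ((m + 2) / 2 + (if (m + 2) % 4 = 0 then 0 else 1)) ∈
        {r | ∃ S : Set (Fin (m + 2)),
          IsTotalOneK (SimpleGraph.cycleGraph (m + 2)) k S ∧ S.ncard = r} := by
      refine ⟨_, cyc_upper hm hk, ?_⟩
      rw [Set.ncard_coe_finset, card_filter_val, count_pred4 _ hn2]
    have h1 : gammaTotalOneK (SimpleGraph.cycleGraph (m + 2)) k
        = (m + 2) / 2 + (if (m + 2) % 4 = 0 then 0 else 1) := by
      unfold gammaTotalOneK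
      refine le_antisymm (Nat.sInf_le hmem) (le_csInf ⟨_, hmem⟩ ?_)
      rintro r ⟨S, hS, rfl⟩
      exact cyc_lower hm S hS
    rw [h1]
    split_ifs <;> omega
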